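/- arXiv:2402.03088 — 4 statements merged into one kernel-verified Lean document; each statement's English description precedes it below -/
import Mathlib

section
/- Let H_A and H_B be finite-dimensional complex Hilbert spaces, let ξ = |ν⟩⟨ν| be a pure state on H_B, and let N be a quantum channel (completely positive trace-preserving linear map) on H_A ⊗ H_B. Define the channel N_A on H_A by N_A(ρ) = Tr_B[N(ρ ⊗ ξ)]. If N_A is a unitary channel, i.e. N_A(ρ) = U ρ U* for some unitary U on H_A, then there exists a quantum channel N_B on H_B such that N(ρ ⊗ ξ) = N_A(ρ) ⊗ N_B(ξ) for all states ρ on H_A. -/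
open Matrix BigOperators
open scoped Kronecker ComplexOrder

noncomputable section

/-- Partial trace over the second tensor factor. -/
def ptraceB {a b : Type*} [Fintype b] (M : Matrix (a × b) (a × b) ℂ) : Matrix a a ℂ :=
  Matrix.of fun i j => ∑ k, M (i, k) (j, k)

/-- Partial trace over the first tensor factor. -/
def ptraceA {a b : Type*} [Fintype a] (M : Matrix (a × b) (a × b) ℂ) : Matrix b b ℂ :=
  Matrix.of fun i j => ∑ k, M (k, i) (k, j)

/-- A quantum state: positive semidefinite with trace one. -/
def IsState {m : Type*} [Fintype m] (ρ : Matrix m m ℂ) : Prop :=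
  ρ.PosSemidef ∧ ρ.trace = 1

/-- A quantum channel: trace-preserving and completely positive (Kraus form). -/
def IsCPTP {m : Type*} [Fintype m] (Φ : Matrix m m ℂ →ₗ[ℂ] Matrix m m ℂ) : Prop :=
  (∀ X, (Φ X).trace = X.trace) ∧
  ∃ (k : ℕ) (K : Fin k → Matrix m m ℂ), ∀ X, Φ X = ∑ i, K i * X * (K i)ᴴ

def IsUnitary {m : Type*} [Fintype m] [DecidableEq m] (U : Matrix m m ℂ) : Prop :=
  U * Uᴴ = 1 ∧ Uᴴ * U = 1

lemma psd_add {n : Type*} [Fintype n] {A B : Matrix n n ℂ} (hA : A.PosSemidef) (hB : B.PosSemidef) :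
    (A + B).PosSemidef := by
  exact hA.add hB

lemma psd_sum {n ι : Type*} [Fintype n] (s : Finset ι) (f : ι → Matrix n n ℂ)
    (h : ∀ i ∈ s, (f i).PosSemidef) : (∑ i ∈ s, f i).PosSemidef := by
  classical
  induction s using Finset.induction_on with
  | empty => simpa using Matrix.PosSemidef.zero
  | insert _ _ hi ih =>
    rw [Finset.sum_insert hi]
    exact psd_add (h _ (Finset.mem_insert_self _ _))
      (ih fun i hmem => h i (Finset.mem_insert_of_mem hmem))

lemma psd_vecMulVec {n : Type*} [Fintype n] (v : n → ℂ) :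
    (Matrix.vecMulVec v (star v)).PosSemidef := by
  refine Matrix.PosSemidef.of_dotProduct_mulVec_nonneg ?_ ?_
  · ext i j
    simp [Matrix.conjTranspose_apply, Matrix.vecMulVec_apply, mul_comm]
  · intro x
    have h1 : Matrix.vecMulVec v (star v) *ᵥ x = fun i => v i * (star v ⬝ᵥ x) := by
      ext i
      simp [Matrix.mulVec, Matrix.vecMulVec_apply, dotProduct, Finset.mul_sum, mul_assoc]
    rw [h1]
    have h2 : star x ⬝ᵥ (fun i => v i * (star v ⬝ᵥ x)) = star (star v ⬝ᵥ x) * (star v ⬝ᵥ x) := by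
      have : star (star v ⬝ᵥ x) = ∑ i, star (x i) * v i := by
        simp only [dotProduct, star_sum, StarMul.star_mul, star_star, Pi.star_apply]
      rw [dotProduct, this, Finset.sum_mul]
      exact Finset.sum_congr rfl fun i _ => by simp [mul_assoc]
    rw [h2]
    exact star_mul_self_nonneg _

lemma sum_mul_star_self_eq_zero {n : Type*} [Fintype n] (G : n → ℂ)
    (h : ∑ i, G i * star (G i) = 0) : ∀ i, G i = 0 := by
  intro i
  have hnn : ∀ j ∈ Finset.univ, (0:ℂ) ≤ G j * star (G j) := fun j _ => by
    simpa [star_star] using star_mul_self_nonneg (star (G j))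
  have := (Finset.sum_eq_zero_iff_of_nonneg hnn).mp h i (Finset.mem_univ i)
  rcases mul_eq_zero.mp this with h' | h'
  · exact h'
  · simpa using star_eq_zero.mp h'

lemma perp_dot {n : Type*} [Fintype n] (v F : n → ℂ)
    (h : ∀ u : n → ℂ, star v ⬝ᵥ u = 0 → F ⬝ᵥ u = 0) (q : n) :
    (star v ⬝ᵥ v) * F q = (F ⬝ᵥ v) * star (v q) := by
  set t : ℂ := star v ⬝ᵥ v with ht
  set c : ℂ := F ⬝ᵥ v with hc
  set G : n → ℂ := fun i => t * F i - c * star (v i) with hG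
  have hGv : ∑ i, G i * v i = 0 := by
    have e1 : ∑ i, G i * v i = t * (∑ i, F i * v i) - c * (∑ i, star (v i) * v i) := by
      rw [Finset.mul_sum, Finset.mul_sum, ← Finset.sum_sub_distrib]
      exact Finset.sum_congr rfl fun i _ => by simp only [hG]; ring
    have h1 : (∑ i, F i * v i) = c := rfl
    have h2 : (∑ i, star (v i) * v i) = t := rfl
    rw [e1, h1, h2]; ring
  have hperp : star v ⬝ᵥ star G = 0 := by
    have e2 : star v ⬝ᵥ star G = star (∑ i, G i * v i) := by
      simp only [dotProduct, star_sum, StarMul.star_mul, Pi.star_apply]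
    rw [e2, hGv, star_zero]
  have hF : F ⬝ᵥ star G = 0 := h _ hperp
  have hGG : ∑ i, G i * star (G i) = 0 := by
    have expand : ∑ i, G i * star (G i)
        = t * (F ⬝ᵥ star G) - c * (star v ⬝ᵥ star G) := by
      simp only [dotProduct, Finset.mul_sum, ← Finset.sum_sub_distrib, Pi.star_apply]
      exact Finset.sum_congr rfl fun i _ => by rw [hG]; ring
    rw [expand, hF, hperp, mul_zero, mul_zero, sub_zero]
  have hGq : t * F q - c * star (v q) = 0 := sum_mul_star_self_eq_zero G hGG q
  exact sub_eq_zero.mp hGq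

lemma key_lemma {a b : Type*} [Fintype a] [Fintype b] [DecidableEq b]
    (W : Matrix (a × b) (a × b) ℂ) (hW : W.PosSemidef) (v : a → ℂ)
    (hTr : ∀ p q : a, ∑ x : b, W (p, x) (q, x) = v p * star (v q))
    (p0 : a) (h0 : v p0 ≠ 0) :
    ∀ p q x y, (v p0 * star (v p0)) * W (p, x) (q, y)
      = v p * star (v q) * W (p0, x) (p0, y) := by
  have ht : star v ⬝ᵥ v ≠ 0 := by
    intro hzero
    have hnn : ∀ j ∈ Finset.univ, (0:ℂ) ≤ star (v j) * v j := fun j _ => star_mul_self_nonneg _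
    have hz : ∑ i, star (v i) * v i = 0 := hzero
    have := (Finset.sum_eq_zero_iff_of_nonneg hnn).mp hz p0 (Finset.mem_univ p0)
    rcases mul_eq_zero.mp this with h' | h'
    · exact h0 (star_eq_zero.mp h')
    · exact h0 h'
  have hcol : ∀ u : a → ℂ, star v ⬝ᵥ u = 0 →
      ∀ (p : a) (x x0 : b), ∑ q, W (p, x) (q, x0) * u q = 0 := by
    intro u hu
    set z : b → (a × b) → ℂ := fun x0 r => u r.1 * (if r.2 = x0 then 1 else 0) with hz
    have hQ : ∀ x0, star (z x0) ⬝ᵥ (W *ᵥ z x0)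
        = ∑ p, ∑ q, star (u p) * W (p, x0) (q, x0) * u q := by
      intro x0
      simp only [dotProduct, mulVec, Fintype.sum_prod_type, hz, Pi.star_apply,
        StarMul.star_mul, apply_ite, star_one, star_zero, mul_ite, ite_mul,
        mul_one, mul_zero, one_mul, zero_mul, Finset.sum_ite_eq', Finset.mem_univ,
        if_true, dotProduct, Finset.sum_ite_irrel, Finset.sum_const_zero]
      exact Finset.sum_congr rfl fun p _ => by
        rw [Finset.mul_sum]
        exact Finset.sum_congr rfl fun q _ => by ring
    have hsum : ∑ x0, star (z x0) ⬝ᵥ (W *ᵥ z x0) = 0 := by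
      have e1 : ∑ x0, star (z x0) ⬝ᵥ (W *ᵥ z x0)
          = ∑ p, ∑ q, (star (u p) * u q) * (v p * star (v q)) := by
        rw [Finset.sum_congr rfl fun x0 _ => hQ x0, Finset.sum_comm]
        refine Finset.sum_congr rfl fun p _ => ?_
        rw [Finset.sum_comm]
        refine Finset.sum_congr rfl fun q _ => ?_
        rw [← hTr p q, Finset.mul_sum]
        exact Finset.sum_congr rfl fun x0 _ => by ring
      have e2 : ∑ p, ∑ q, (star (u p) * u q) * (v p * star (v q))
          = (∑ p, star (u p) * v p) * (∑ q, star (v q) * u q) := by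
        rw [Finset.sum_mul_sum]
        exact Finset.sum_congr rfl fun p _ => Finset.sum_congr rfl fun q _ => by ring
      have e3 : (∑ q, star (v q) * u q) = 0 := hu
      rw [e1, e2, e3, mul_zero]
    have hzero : ∀ x0, W *ᵥ z x0 = 0 := by
      intro x0
      have hnn : ∀ x0 ∈ Finset.univ, (0:ℂ) ≤ star (z x0) ⬝ᵥ (W *ᵥ z x0) :=
        fun x0 _ => hW.dotProduct_mulVec_nonneg (z x0)
      have := (Finset.sum_eq_zero_iff_of_nonneg hnn).mp hsum x0 (Finset.mem_univ x0)
      exact (hW.dotProduct_mulVec_zero_iff (z x0)).mp this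
    intro p x x0
    have := congrFun (hzero x0) (p, x)
    have e4 : (W *ᵥ z x0) (p, x) = ∑ q, W (p, x) (q, x0) * u q := by
      simp only [mulVec, dotProduct, Fintype.sum_prod_type, hz, mul_ite, mul_one, mul_zero,
        Finset.sum_ite_eq', Finset.mem_univ, if_true, Finset.sum_ite_irrel,
        Finset.sum_const_zero]
    rw [e4] at this
    exact this
  have hF : ∀ (p : a) (x y : b) (q : a), (star v ⬝ᵥ v) * W (p, x) (q, y)
      = ((fun r => W (p, x) (r, y)) ⬝ᵥ v) * star (v q) := by
    intro p x y q
    exact perp_dot v (fun r => W (p, x) (r, y)) (fun u hu => hcol u hu p x y) q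
  have R1 : ∀ p q x y, star (v p0) * W (p, x) (q, y) = star (v q) * W (p, x) (p0, y) := by
    intro p q x y
    refine mul_left_cancel₀ ht ?_
    have h1 := hF p x y q
    have h2 := hF p x y p0
    calc (star v ⬝ᵥ v) * (star (v p0) * W (p, x) (q, y))
        = star (v p0) * ((star v ⬝ᵥ v) * W (p, x) (q, y)) := by ring
      _ = star (v p0) * (((fun r => W (p, x) (r, y)) ⬝ᵥ v) * star (v q)) := by rw [h1]
      _ = star (v q) * (((fun r => W (p, x) (r, y)) ⬝ᵥ v) * star (v p0)) := by ring
      _ = star (v q) * ((star v ⬝ᵥ v) * W (p, x) (p0, y)) := by rw [← h2]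
      _ = (star v ⬝ᵥ v) * (star (v q) * W (p, x) (p0, y)) := by ring
  have R2 : ∀ (p : a) (x y : b), v p0 * W (p, x) (p0, y) = v p * W (p0, x) (p0, y) := by
    intro p x y
    have h3 := R1 p0 p y x
    have h4 := congrArg star h3
    simp only [StarMul.star_mul, star_star] at h4
    rw [hW.1.apply, hW.1.apply] at h4
    calc v p0 * W (p, x) (p0, y) = W (p, x) (p0, y) * v p0 := by ring
      _ = W (p0, x) (p0, y) * v p := h4
      _ = v p * W (p0, x) (p0, y) := by ring
  intro p q x y
  calc (v p0 * star (v p0)) * W (p, x) (q, y)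
      = v p0 * (star (v p0) * W (p, x) (q, y)) := by ring
    _ = v p0 * (star (v q) * W (p, x) (p0, y)) := by rw [R1]
    _ = star (v q) * (v p0 * W (p, x) (p0, y)) := by ring
    _ = star (v q) * (v p * W (p0, x) (p0, y)) := by rw [R2]
    _ = v p * star (v q) * W (p0, x) (p0, y) := by ring

lemma trip_apply {l m n o : Type*} [Fintype m] [Fintype n]
    (A : Matrix l m ℂ) (X : Matrix m n ℂ) (B : Matrix n o ℂ) (r : l) (s : o) :
    (A * X * B) r s = ∑ i, ∑ j, A r i * X i j * B j s := by
  rw [Matrix.mul_apply]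
  refine Eq.trans (Finset.sum_congr rfl fun j _ => by rw [Matrix.mul_apply, Finset.sum_mul]) ?_
  rw [Finset.sum_comm]

lemma kraus_vecMulVec {m n : Type*} [Fintype m] [Fintype n] (K : Matrix m n ℂ) (x y : n → ℂ) :
    K * Matrix.vecMulVec x (star y) * Kᴴ = Matrix.vecMulVec (K *ᵥ x) (star (K *ᵥ y)) := by
  ext r s
  rw [trip_apply]
  simp only [Matrix.vecMulVec_apply, Pi.star_apply, Matrix.conjTranspose_apply,
    Matrix.mulVec, dotProduct]
  rw [star_sum, Finset.sum_mul_sum]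
  refine Finset.sum_congr rfl fun i _ => Finset.sum_congr rfl fun j _ => ?_
  simp only [StarMul.star_mul]
  ring

lemma std_conjTranspose {n : Type*} [Fintype n] [DecidableEq n] (i j : n) :
    (Matrix.single i j (1:ℂ))ᴴ = Matrix.single j i 1 := by
  ext r s
  simp only [Matrix.conjTranspose_apply, Matrix.single, Matrix.of_apply]
  split_ifs with h1 h2 h2 <;> simp_all [and_comm]

lemma trace_mid {n : Type*} [Fintype n] [DecidableEq n] (X : Matrix n n ℂ) :
    ∑ p : n, ∑ q : n, Matrix.single p q (1:ℂ) * X * Matrix.single q p 1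
      = X.trace • (1 : Matrix n n ℂ) := by
  ext r s
  simp only [Matrix.sum_apply, trip_apply, Matrix.single, Matrix.of_apply,
    Matrix.smul_apply, Matrix.one_apply, Matrix.trace, Matrix.diag, smul_eq_mul]
  simp [ite_and, Finset.sum_ite_eq, Finset.sum_ite_eq', mul_comm, eq_comm]

lemma mulUE {n : Type*} [Fintype n] [DecidableEq n] (U : Matrix n n ℂ) (i j a a' : n) :
    (U * Matrix.single i j (1:ℂ) * Uᴴ) a a' = U a i * star (U a' j) := by
  rw [trip_apply]
  simp [Matrix.single, Matrix.conjTranspose_apply, ite_and, mul_ite,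
    Finset.sum_ite_eq, Finset.sum_ite_eq']

/-- If the channel induced on system A by a fixed pure environment state is unitary,
the joint output factorizes as a product. -/
theorem stmt_0 {mA mB : Type*} [Fintype mA] [DecidableEq mA] [Fintype mB] [DecidableEq mB]
    (N : Matrix (mA × mB) (mA × mB) ℂ →ₗ[ℂ] Matrix (mA × mB) (mA × mB) ℂ)
    (hN : IsCPTP N)
    (ν : mB → ℂ) (hν : star ν ⬝ᵥ ν = 1)
    (ξ : Matrix mB mB ℂ) (hξ : ξ = Matrix.vecMulVec ν (star ν))
    (U : Matrix mA mA ℂ) (hU : IsUnitary U)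
    (hNA : ∀ ρ : Matrix mA mA ℂ, ptraceB (N (ρ ⊗ₖ ξ)) = U * ρ * Uᴴ) :
    ∃ NB : Matrix mB mB ℂ →ₗ[ℂ] Matrix mB mB ℂ, IsCPTP NB ∧
      ∀ ρ : Matrix mA mA ℂ, IsState ρ →
        N (ρ ⊗ₖ ξ) = (ptraceB (N (ρ ⊗ₖ ξ))) ⊗ₖ (NB ξ) := by

  classical
  obtain ⟨hNtr, k, K, hK⟩ := hN
  rcases isEmpty_or_nonempty mA with hA | hA
  · refine ⟨LinearMap.id, ⟨fun X => rfl, 1, fun _ => 1, fun X => by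
      simp [Matrix.conjTranspose_one]⟩, ?_⟩
    intro ρ hρ
    exfalso
    have h0 : ρ.trace = 0 := by
      rw [Matrix.trace]
      simp
    rw [hρ.2] at h0
    exact one_ne_zero h0
  · -- main case
    set f : mA → (mA × mB) → ℂ := fun i r => (if r.1 = i then 1 else 0) * ν r.2 with hf
    have hkron : ∀ i j : mA,
        (Matrix.single i j (1:ℂ)) ⊗ₖ ξ = Matrix.vecMulVec (f i) (star (f j)) := by
      intro i j
      ext ⟨a, b⟩ ⟨a', b'⟩
      have hL : (Matrix.single i j (1:ℂ)) a a'
          = (if a = i then (1:ℂ) else 0) * (if a' = j then 1 else 0) := by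
        simp only [Matrix.single, Matrix.of_apply]
        rcases eq_or_ne a i with h1 | h1 <;> rcases eq_or_ne a' j with h2 | h2
        · subst h1; subst h2; simp
        · subst h1; simp [h2, Ne.symm h2]
        · simp [h1, Ne.symm h1]
        · simp [h1, h2, Ne.symm h1]
      have hstar : star (if a' = j then (1:ℂ) else 0) = (if a' = j then 1 else 0) := by
        split_ifs <;> simp
      rw [Matrix.kronecker_apply, hL, hξ, Matrix.vecMulVec_apply, Matrix.vecMulVec_apply]
      show _ = f i (a, b) * (star (f j)) (a', b')
      rw [hf]
      simp only [Pi.star_apply, StarMul.star_mul, hstar]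
      ring
    have hNE : ∀ i j : mA, N ((Matrix.single i j (1:ℂ)) ⊗ₖ ξ)
        = ∑ κ, Matrix.vecMulVec (K κ *ᵥ f i) (star (K κ *ᵥ f j)) := by
      intro i j
      rw [hK, hkron]
      exact Finset.sum_congr rfl fun κ _ => kraus_vecMulVec (K κ) (f i) (f j)
    set W : Matrix ((mA × mA) × mB) ((mA × mA) × mB) ℂ :=
      Matrix.of fun p q =>
        (N ((Matrix.single p.1.1 q.1.1 (1:ℂ)) ⊗ₖ ξ)) (p.1.2, p.2) (q.1.2, q.2) with hWdef
    have hWapp : ∀ (i j : mA) (a a' : mA) (b b' : mB),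
        W ((i, a), b) ((j, a'), b') = (N ((Matrix.single i j (1:ℂ)) ⊗ₖ ξ)) (a, b) (a', b') :=
      fun _ _ _ _ _ _ => rfl
    have hWpsd : W.PosSemidef := by
      have hrep : W = ∑ κ, Matrix.vecMulVec (fun p : (mA × mA) × mB => (K κ *ᵥ f p.1.1) (p.1.2, p.2))
          (star (fun p : (mA × mA) × mB => (K κ *ᵥ f p.1.1) (p.1.2, p.2))) := by
        ext ⟨⟨i, a⟩, b⟩ ⟨⟨j, a'⟩, b'⟩
        rw [hWapp, hNE, Matrix.sum_apply, Matrix.sum_apply]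
        rfl
      rw [hrep]
      exact psd_sum _ _ fun κ _ => psd_vecMulVec _
    set w : mA × mA → ℂ := fun p => U p.2 p.1 with hw
    have hTr : ∀ p q : mA × mA, ∑ x : mB, W (p, x) (q, x) = w p * star (w q) := by
      rintro ⟨i, a⟩ ⟨j, a'⟩
      have h1 := congrFun (congrFun (hNA (Matrix.single i j (1:ℂ))) a) a'
      have h2 : ptraceB (N ((Matrix.single i j (1:ℂ)) ⊗ₖ ξ)) a a'
          = ∑ x : mB, W ((i, a), x) ((j, a'), x) := by
        rw [ptraceB]
        rfl
      rw [h2] at h1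
      rw [h1, mulUE]
    obtain ⟨i0⟩ := hA
    have hex : ∃ a0 : mA, U a0 i0 ≠ 0 := by
      by_contra hne
      push_neg at hne
      have h1 : (Uᴴ * U) i0 i0 = 1 := by rw [hU.2]; simp
      rw [Matrix.mul_apply] at h1
      simp only [Matrix.conjTranspose_apply, hne, mul_zero, Finset.sum_const_zero] at h1
      exact one_ne_zero h1.symm
    obtain ⟨a0, ha0⟩ := hex
    have hw0 : w (i0, a0) ≠ 0 := ha0
    have hkey := key_lemma W hWpsd w hTr (i0, a0) hw0
    set t' : ℂ := w (i0, a0) * star (w (i0, a0)) with ht'def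
    have ht' : t' ≠ 0 := mul_ne_zero hw0 (star_ne_zero.mpr hw0)
    set σ : Matrix mB mB ℂ := Matrix.of fun x y => W ((i0, a0), x) ((i0, a0), y) / t' with hσdef
    have hWfac : ∀ (i j a a' : mA) (b b' : mB),
        W ((i, a), b) ((j, a'), b') = U a i * star (U a' j) * σ b b' := by
      intro i j a a' b b'
      have h2 : W ((i, a), b) ((j, a'), b')
          = (w (i, a) * star (w (j, a')) * W ((i0, a0), b) ((i0, a0), b')) / t' := by
        rw [eq_div_iff ht', mul_comm]
        exact hkey (i, a) (j, a') b b'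
      rw [h2]
      exact mul_div_assoc _ _ _
    have hfact : ∀ ρ : Matrix mA mA ℂ, N (ρ ⊗ₖ ξ) = (U * ρ * Uᴴ) ⊗ₖ σ := by
      intro ρ
      have hlin : ρ ⊗ₖ ξ = ∑ i, ∑ j, ρ i j • ((Matrix.single i j (1:ℂ)) ⊗ₖ ξ) := by
        ext ⟨a, b⟩ ⟨a', b'⟩
        simp only [Matrix.kroneckerMap_apply, Matrix.sum_apply, Matrix.smul_apply,
          Matrix.single, Matrix.of_apply, smul_eq_mul, mul_ite, ite_mul, mul_zero,
          zero_mul, mul_one, ite_and, Finset.sum_ite_eq, Finset.sum_ite_eq', Finset.mem_univ,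
          if_true, Finset.sum_ite_irrel, Finset.sum_const_zero, one_mul]
      rw [hlin, map_sum]
      ext ⟨a, b⟩ ⟨a', b'⟩
      rw [Matrix.sum_apply]
      have hterm : ∀ i ∈ Finset.univ, (N (∑ j, ρ i j • ((Matrix.single i j (1:ℂ)) ⊗ₖ ξ))) (a, b) (a', b')
          = ∑ j, ρ i j * (U a i * star (U a' j) * σ b b') := by
        intro i _
        rw [map_sum, Matrix.sum_apply]
        refine Finset.sum_congr rfl fun j _ => ?_
        rw [LinearMap.map_smul, Matrix.smul_apply, smul_eq_mul, ← hWapp, hWfac]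
      rw [Finset.sum_congr rfl hterm]
      rw [Matrix.kroneckerMap_apply, trip_apply]
      rw [Finset.sum_mul]
      refine Finset.sum_congr rfl fun i _ => ?_
      rw [Finset.sum_mul]
      refine Finset.sum_congr rfl fun j _ => ?_
      rw [Matrix.conjTranspose_apply]
      ring
    -- properties of σ
    have hσtr : σ.trace = 1 := by
      rw [Matrix.trace]
      simp only [Matrix.diag, hσdef, Matrix.of_apply]
      rw [← Finset.sum_div, hTr (i0, a0) (i0, a0), ← ht'def, div_self ht']
    have hstart' : star t' = t' := by
      rw [ht'def, StarMul.star_mul, star_star]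
    have hσpsd : σ.PosSemidef := by
      have hsub := hWpsd.submatrix (fun x : mB => ((i0, a0), x))
      have hrt : t' = (Complex.normSq (w (i0, a0)) : ℂ) := by
        rw [ht'def, RCLike.star_def, Complex.mul_conj]
      refine Matrix.PosSemidef.of_dotProduct_mulVec_nonneg ?_ ?_
      · ext x y
        rw [Matrix.conjTranspose_apply, hσdef, Matrix.of_apply, Matrix.of_apply, star_div₀,
          hstart', hWpsd.1.apply]
      · intro x
        have h1 : σ *ᵥ x = t'⁻¹ • ((W.submatrix (fun x : mB => ((i0, a0), x)) (fun x : mB => ((i0, a0), x))) *ᵥ x) := by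
          ext y
          simp only [Matrix.mulVec, dotProduct, Pi.smul_apply, smul_eq_mul, Finset.mul_sum,
            Matrix.submatrix_apply, hσdef, Matrix.of_apply]
          exact Finset.sum_congr rfl fun z _ => by rw [div_eq_inv_mul]; ring
        rw [h1, dotProduct_smul, smul_eq_mul]
        have h2 : (0:ℂ) ≤ t'⁻¹ := by
          rw [hrt, ← Complex.ofReal_inv]
          exact Complex.zero_le_real.mpr (inv_nonneg.mpr (Complex.normSq_nonneg _))
        exact mul_nonneg h2 (hsub.dotProduct_mulVec_nonneg x)
    -- the channel NB
    obtain ⟨B, hB⟩ : ∃ B : Matrix mB mB ℂ, σ = star B * B := by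
      open scoped MatrixOrder in
      exact CStarAlgebra.nonneg_iff_eq_star_mul_self.mp hσpsd.nonneg
    set S : Matrix mB mB ℂ := Bᴴ with hSdef
    have hSS : S * Sᴴ = σ := by
      rw [hSdef, conjTranspose_conjTranspose, hB]; rfl
    set n : ℕ := Fintype.card (mB × mB) with hn
    set e : (mB × mB) ≃ Fin n := Fintype.equivFin (mB × mB) with he
    set KB : Fin n → Matrix mB mB ℂ :=
      fun κ => S * Matrix.single (e.symm κ).1 (e.symm κ).2 (1:ℂ) with hKB
    have hNBkraus : ∀ X : Matrix mB mB ℂ, X.trace • σ = ∑ κ, KB κ * X * (KB κ)ᴴ := by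
      intro X
      have h1 : ∑ κ, KB κ * X * (KB κ)ᴴ
          = ∑ pq : mB × mB, S * (Matrix.single pq.1 pq.2 (1:ℂ) * X *
              Matrix.single pq.2 pq.1 (1:ℂ)) * Sᴴ := by
        rw [← Equiv.sum_comp e.symm
          (fun pq => S * (Matrix.single pq.1 pq.2 (1:ℂ) * X *
            Matrix.single pq.2 pq.1 (1:ℂ)) * Sᴴ)]
        refine Finset.sum_congr rfl fun κ _ => ?_
        rw [hKB, Matrix.conjTranspose_mul, std_conjTranspose]
        noncomm_ring
      rw [h1, ← Finset.sum_mul, ← Finset.mul_sum, Fintype.sum_prod_type, trace_mid]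
      rw [_root_.Matrix.mul_smul, _root_.Matrix.smul_mul, mul_one, hSS]
    refine ⟨{ toFun := fun X => X.trace • σ
              map_add' := fun X Y => by simp only [Matrix.trace_add, add_smul]
              map_smul' := fun c X => by
                simp only [Matrix.trace_smul, smul_eq_mul, RingHom.id_apply]
                rw [mul_smul] }, ⟨?_, n, KB, ?_⟩, ?_⟩
    · intro X
      simp only [LinearMap.coe_mk, AddHom.coe_mk]
      rw [Matrix.trace_smul, hσtr, smul_eq_mul, mul_one]
    · intro X
      simp only [LinearMap.coe_mk, AddHom.coe_mk]
      exact hNBkraus X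
    · intro ρ hρ
      have hξtr : ξ.trace = 1 := by
        rw [hξ, Matrix.trace]
        simp only [Matrix.diag, Matrix.vecMulVec_apply, Pi.star_apply]
        rw [← hν]
        exact Finset.sum_congr rfl fun b _ => mul_comm _ _
      simp only [LinearMap.coe_mk, AddHom.coe_mk]
      rw [hξtr, one_smul, hNA ρ]
      exact hfact ρ
end
end

section
/- Let H_A and H_B be finite-dimensional and let N be a quantum channel on H_A ⊗ H_B. Suppose that for every pure state ξ on H_B the channel N_{A,ξ}(ρ) = Tr_B[N(ρ ⊗ ξ)] on H_A is unitary. Then N = N_A ⊗ N_B, where N_A is a fixed unitary channel on H_A and N_B is a quantum channel on H_B. -/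
open Matrix BigOperators
open scoped Kronecker ComplexOrder

noncomputable section

/-! ### Auxiliary lemmas -/

section Aux

set_option linter.unusedSectionVars false

lemma trace_forall_eq {n : Type*} [Fintype n] [DecidableEq n]
    (A : Matrix n n ℂ) (c : ℂ)
    (h : ∀ ρ : Matrix n n ℂ, (A * ρ).trace = c * ρ.trace) : A = c • 1 := by
  ext a b
  have := h (Matrix.single b a 1)
  rw [Matrix.trace, Matrix.trace] at this
  simp only [Matrix.diag, Matrix.mul_apply, Matrix.single, Matrix.of_apply,
    mul_ite, mul_one, mul_zero, ite_and, Finset.sum_ite_eq, Finset.sum_ite_eq',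
    Finset.mem_univ, if_true] at this
  by_cases hab : a = b
  · subst hab; simpa using this
  · simp only [Matrix.smul_apply, Matrix.one_apply, if_neg hab, mul_zero, smul_zero]
    simpa [hab, eq_comm] using this

lemma quad {n ι : Type*} [Fintype n] [Fintype ι]
    (v : ι → n → ℂ) (x : n → ℂ)
    (h : ∀ a b, ∑ j, v j a * (starRingEnd ℂ) (v j b) = x a * (starRingEnd ℂ) (x b))
    (y z : n → ℂ) :
    ∑ j, (star y ⬝ᵥ v j) * (starRingEnd ℂ) (star z ⬝ᵥ v j)
      = (star y ⬝ᵥ x) * (starRingEnd ℂ) (star z ⬝ᵥ x) := by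
  have expand : ∀ w : n → ℂ, (star y ⬝ᵥ w) * (starRingEnd ℂ) (star z ⬝ᵥ w)
      = ∑ a, ∑ b, ((starRingEnd ℂ) (y a) * z b) * (w a * (starRingEnd ℂ) (w b)) := by
    intro w
    rw [dotProduct, dotProduct, map_sum, Finset.sum_mul_sum]
    refine Finset.sum_congr rfl fun a _ => Finset.sum_congr rfl fun b _ => ?_
    simp only [Pi.star_apply, _root_.map_mul, Complex.star_def, Complex.conj_conj]
    ring
  calc ∑ j, (star y ⬝ᵥ v j) * (starRingEnd ℂ) (star z ⬝ᵥ v j)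
      = ∑ j, ∑ a, ∑ b, ((starRingEnd ℂ) (y a) * z b) * (v j a * (starRingEnd ℂ) (v j b)) := by
        exact Finset.sum_congr rfl fun j _ => expand (v j)
    _ = ∑ a, ∑ b, ((starRingEnd ℂ) (y a) * z b) * ∑ j, (v j a * (starRingEnd ℂ) (v j b)) := by
        rw [Finset.sum_comm]
        refine Finset.sum_congr rfl fun a _ => ?_
        rw [Finset.sum_comm]
        exact Finset.sum_congr rfl fun b _ => (Finset.mul_sum _ _ _).symm
    _ = ∑ a, ∑ b, ((starRingEnd ℂ) (y a) * z b) * (x a * (starRingEnd ℂ) (x b)) := by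
        refine Finset.sum_congr rfl fun a _ => Finset.sum_congr rfl fun b _ => by rw [h]
    _ = (star y ⬝ᵥ x) * (starRingEnd ℂ) (star z ⬝ᵥ x) := (expand x).symm

lemma rankone {n ι : Type*} [Fintype n] [Fintype ι]
    (v : ι → n → ℂ) (x : n → ℂ)
    (h : ∀ a b, ∑ j, v j a * (starRingEnd ℂ) (v j b) = x a * (starRingEnd ℂ) (x b)) :
    ∀ j, ∃ c : ℂ, v j = c • x := by
  have S : ∀ y : n → ℂ, star y ⬝ᵥ x = 0 → ∀ j, star y ⬝ᵥ v j = 0 := by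
    intro y hy j
    have hq := quad v x h y y
    rw [hy, zero_mul] at hq
    have hq' : ∑ j, (Complex.normSq (star y ⬝ᵥ v j) : ℂ) = 0 := by
      rw [← hq]
      exact Finset.sum_congr rfl fun j _ => (Complex.mul_conj _).symm
    have : ∑ j, Complex.normSq (star y ⬝ᵥ v j) = 0 := by
      exact_mod_cast hq'
    have hz := (Finset.sum_eq_zero_iff_of_nonneg
      (fun j _ => Complex.normSq_nonneg _)).mp this j (Finset.mem_univ j)
    exact Complex.normSq_eq_zero.mp hz
  intro j
  by_cases hx : x = 0
  · refine ⟨0, ?_⟩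
    have h0 : star (v j) ⬝ᵥ x = 0 := by simp [hx]
    have := S (v j) h0 j
    have hv := dotProduct_star_self_eq_zero.mp this
    simp [hv, hx]
  · set d : ℂ := star x ⬝ᵥ x with hd
    have hdself : star d = d := by
      rw [hd]; exact (Matrix.star_dotProduct _ _).symm
    have hdne : d ≠ 0 := fun h0 => hx (dotProduct_star_self_eq_zero.mp (hd ▸ h0))
    set s : ℂ := star x ⬝ᵥ v j with hs
    set c : ℂ := s / d with hc
    set y : (n → ℂ) := v j - c • x with hy
    have hyx : star y ⬝ᵥ x = 0 := by
      rw [hy, star_sub, sub_dotProduct, star_smul, smul_dotProduct]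
      have h1 : star (v j) ⬝ᵥ x = star s := by
        rw [hs, Matrix.star_dotProduct]
      rw [h1, hc, ← hd]
      simp only [smul_eq_mul]
      rw [star_div₀, hdself]
      field_simp
      ring
    have hyv : star y ⬝ᵥ v j = 0 := S y hyx j
    have hyy : star y ⬝ᵥ y = 0 := by
      rw [hy]
      conv_lhs => rw [show star (v j - c • x) ⬝ᵥ (v j - c • x)
        = star (v j - c • x) ⬝ᵥ v j - c * (star (v j - c • x) ⬝ᵥ x) by
          rw [dotProduct_sub, dotProduct_smul]; simp]
      rw [← hy, hyv, hyx, mul_zero, sub_zero]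
    have : y = 0 := dotProduct_star_self_eq_zero.mp hyy
    refine ⟨c, ?_⟩
    exact sub_eq_zero.mp (hy ▸ this)

lemma eigen_all {n : Type*} [Fintype n] [DecidableEq n] (M : Matrix n n ℂ)
    (h : ∀ x : n → ℂ, ∃ c : ℂ, M *ᵥ x = c • x) : ∃ c : ℂ, M = c • 1 := by
  rcases isEmpty_or_nonempty n with hn | hn
  · exact ⟨0, Subsingleton.elim _ _⟩
  · obtain ⟨a₀⟩ := hn
    choose c hc using fun x => h x
    have key : ∀ a b : n, M a b = (if a = b then c (Pi.single b 1) else 0) := by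
      intro a b
      have := congr_fun (hc (Pi.single b 1)) a
      rw [Matrix.mulVec_single] at this
      simp only [Pi.smul_apply, Pi.single_apply, smul_eq_mul, mul_one] at this
      by_cases hab : a = b
      · subst hab; simpa using this
      · simpa [hab] using this
    have ceq : ∀ b : n, c (Pi.single b 1) = c (Pi.single a₀ 1) := by
      intro b
      by_cases hb : b = a₀
      · rw [hb]
      · set x : n → ℂ := Pi.single a₀ 1 + Pi.single b 1 with hx
        have hMx : M *ᵥ x = c (Pi.single a₀ 1) • (Pi.single a₀ 1 : n → ℂ)
            + c (Pi.single b 1) • (Pi.single b 1 : n → ℂ) := by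
          rw [hx, Matrix.mulVec_add, hc, hc]
        have h1 : c (Pi.single a₀ 1) = c x := by
          have := congr_fun ((hc x).symm.trans hMx) a₀
          simp only [hx, Pi.add_apply, Pi.smul_apply, Pi.single_apply, smul_eq_mul] at this
          simpa [Ne.symm hb] using this.symm
        have h2 : c (Pi.single b 1) = c x := by
          have := congr_fun ((hc x).symm.trans hMx) b
          simp only [hx, Pi.add_apply, Pi.smul_apply, Pi.single_apply, smul_eq_mul] at this
          simpa [hb] using this.symm
        rw [h1, h2]
    refine ⟨c (Pi.single a₀ 1), ?_⟩
    ext a b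
    rw [key a b, Matrix.smul_apply, Matrix.one_apply]
    by_cases hab : a = b
    · simp [hab, ceq b]
    · simp [hab]

lemma mul_vecMulVec_mul {n : Type*} [Fintype n] (M N : Matrix n n ℂ) (x : n → ℂ) :
    M * vecMulVec x (star x) * Nᴴ = vecMulVec (M *ᵥ x) (star (N *ᵥ x)) := by
  ext a b
  have hR : vecMulVec (M *ᵥ x) (star (N *ᵥ x)) a b
      = ∑ p, ∑ q, M a p * x p * (star (x q) * star (N b q)) := by
    simp only [vecMulVec_apply, Pi.star_apply, Matrix.mulVec, dotProduct, star_sum, star_mul']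
    rw [Finset.sum_mul_sum]
    exact Finset.sum_congr rfl fun p _ => Finset.sum_congr rfl fun q _ => by ring
  rw [hR, Finset.sum_comm]
  simp only [Matrix.mul_apply, vecMulVec_apply, conjTranspose_apply, Pi.star_apply,
    Finset.sum_mul]
  exact Finset.sum_congr rfl fun q _ => Finset.sum_congr rfl fun p _ => by ring

lemma kraus_id' {n ι : Type*} [Fintype n] [DecidableEq n] [Fintype ι]
    (M : ι → Matrix n n ℂ)
    (h : ∀ ρ : Matrix n n ℂ, ∑ j, M j * ρ * (M j)ᴴ = ρ) :
    ∀ j, ∃ c : ℂ, M j = c • 1 := by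
  intro j
  have key : ∀ x : n → ℂ, ∃ c : ℂ, M j *ᵥ x = c • x := by
    intro x
    have hx := h (vecMulVec x (star x))
    have hx' : ∑ j', vecMulVec (M j' *ᵥ x) (star (M j' *ᵥ x)) = vecMulVec x (star x) := by
      rw [← hx]
      exact Finset.sum_congr rfl fun j' _ => (mul_vecMulVec_mul (M j') (M j') x).symm
    refine rankone (fun j' => M j' *ᵥ x) x ?_ j
    intro a b
    have := congr_fun (congr_fun hx' a) b
    rw [Matrix.sum_apply] at this
    simp only [vecMulVec_apply, Pi.star_apply] at this
    rw [starRingEnd_apply, ← this]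
    exact Finset.sum_congr rfl fun j' _ => by rw [starRingEnd_apply]
  exact eigen_all (M j) key

lemma kraus_unitary {n ι : Type*} [Fintype n] [DecidableEq n] [Fintype ι]
    (M : ι → Matrix n n ℂ) (U : Matrix n n ℂ) (hU : U * Uᴴ = 1 ∧ Uᴴ * U = 1)
    (h : ∀ ρ : Matrix n n ℂ, ∑ j, M j * ρ * (M j)ᴴ = U * ρ * Uᴴ) :
    ∀ j, ∃ c : ℂ, M j = c • U := by
  have h' : ∀ ρ : Matrix n n ℂ, ∑ j, (M j * Uᴴ) * ρ * (M j * Uᴴ)ᴴ = ρ := by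
    intro ρ
    calc ∑ j, (M j * Uᴴ) * ρ * (M j * Uᴴ)ᴴ
        = ∑ j, M j * (Uᴴ * ρ * U) * (M j)ᴴ := by
          refine Finset.sum_congr rfl fun j _ => ?_
          rw [conjTranspose_mul, conjTranspose_conjTranspose]
          simp only [Matrix.mul_assoc]
      _ = U * (Uᴴ * ρ * U) * Uᴴ := h _
      _ = (U * Uᴴ) * ρ * (U * Uᴴ) := by simp only [Matrix.mul_assoc]
      _ = ρ := by rw [hU.1, Matrix.one_mul, Matrix.mul_one]
  intro j
  obtain ⟨c, hc⟩ := kraus_id' _ h' j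
  refine ⟨c, ?_⟩
  have h2 : M j * Uᴴ * U = (c • 1) * U := by rw [hc]
  rw [Matrix.mul_assoc, hU.2, Matrix.mul_one, Matrix.smul_mul, Matrix.one_mul] at h2
  exact h2

variable {mA mB : Type*} [Fintype mA] [DecidableEq mA] [Fintype mB] [DecidableEq mB]

/-- `⟨e_r|` on the B factor. -/
def Pm (r : mB) : Matrix mA (mA × mB) ℂ :=
  Matrix.of fun a p => if p.1 = a ∧ p.2 = r then 1 else 0

/-- `1 ⊗ |ν⟩`. -/
def Qm (ν : mB → ℂ) : Matrix (mA × mB) mA ℂ :=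
  Matrix.of fun p b => if p.1 = b then ν p.2 else 0

/-- The B-contracted block `(1 ⊗ ⟨e_r|) K (1 ⊗ |ν⟩)`. -/
def Am (K : Matrix (mA × mB) (mA × mB) ℂ) (r : mB) (ν : mB → ℂ) : Matrix mA mA ℂ :=
  Matrix.of fun a b => ∑ s, K (a, r) (b, s) * ν s

lemma F1 (M : Matrix (mA × mB) (mA × mB) ℂ) :
    ptraceB M = ∑ r, ((Pm (mA := mA) r : Matrix mA (mA × mB) ℂ) * M * (Pm (mA := mA) r)ᴴ : Matrix mA mA ℂ) := by
  ext a b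
  rw [Matrix.sum_apply]
  refine Finset.sum_congr rfl fun r _ => ?_
  simp [Matrix.mul_apply, Pm, conjTranspose_apply, Fintype.sum_prod_type, ite_and,
    apply_ite (starRingEnd ℂ), Finset.sum_ite_eq, Finset.sum_ite_eq', mul_ite, ite_mul]

lemma F2 (X : Matrix mA mA ℂ) (ν μ : mB → ℂ) :
    X ⊗ₖ Matrix.vecMulVec ν (star μ) = Qm (mA := mA) ν * X * (Qm (mA := mA) μ)ᴴ := by
  ext ⟨a, s⟩ ⟨b, t⟩
  simp only [Matrix.mul_apply, Qm, conjTranspose_apply, Matrix.of_apply, kroneckerMap_apply,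
    vecMulVec_apply, Pi.star_apply, Fintype.sum_prod_type, ite_mul, zero_mul, mul_ite, mul_zero,
    apply_ite (star : ℂ → ℂ), star_zero]
  simp only [Finset.sum_ite_eq, Finset.sum_ite_eq', Finset.mem_univ, if_true]
  ring

lemma F3 (K : Matrix (mA × mB) (mA × mB) ℂ) (r : mB) (ν : mB → ℂ) :
    Pm (mA := mA) r * K * Qm (mA := mA) ν = Am K r ν := by
  ext a b
  simp only [Matrix.mul_apply, Pm, Qm, Am, Matrix.of_apply, Fintype.sum_prod_type, ite_mul,
    one_mul, zero_mul, mul_ite, mul_zero, ite_and]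
  simp [Finset.sum_ite_eq, Finset.sum_ite_eq']

lemma F4 : ∑ r : mB, (Pm (mA := mA) r)ᴴ * (Pm (mA := mA) r : Matrix mA (mA × mB) ℂ) = 1 := by
  ext ⟨a, s⟩ ⟨b, t⟩
  rw [Matrix.sum_apply]
  simp only [Matrix.mul_apply, Pm, conjTranspose_apply, Matrix.of_apply,
    apply_ite (starRingEnd ℂ), _root_.map_one, _root_.map_zero, ite_mul, one_mul, zero_mul,
    mul_ite, mul_one, mul_zero, ite_and]
  simp only [Finset.sum_ite_eq, Finset.sum_ite_eq', Finset.mem_univ, if_true,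
    Matrix.one_apply, Prod.ext_iff]
  by_cases h1 : a = b <;> by_cases h2 : s = t <;> simp [h1, h2]

lemma Am_smul (K : Matrix (mA × mB) (mA × mB) ℂ) (r : mB) (c : ℂ) (ν : mB → ℂ) :
    Am K r (c • ν) = c • Am K r ν := by
  ext a b
  simp only [Am, Matrix.of_apply, Matrix.smul_apply, Pi.smul_apply, smul_eq_mul,
    Finset.mul_sum]
  exact Finset.sum_congr rfl fun sx _ => by ring

lemma Am_single (K : Matrix (mA × mB) (mA × mB) ℂ) (r : mB) (s : mB) (a b : mA) :
    Am K r (Pi.single s 1) a b = K (a, r) (b, s) := by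
  simp [Am, Pi.single_apply, mul_ite, Finset.sum_ite_eq', Finset.sum_ite_eq]

lemma kron_conjTranspose {l m n p : Type*} (A : Matrix l m ℂ) (B : Matrix n p ℂ) :
    (A ⊗ₖ B)ᴴ = Aᴴ ⊗ₖ Bᴴ := by
  ext ⟨a, s⟩ ⟨b, t⟩
  simp [conjTranspose_apply, kroneckerMap_apply, star_mul', mul_comm]

end Aux

/-- If every pure environment state induces a unitary channel on A, then the channel
is a product of a fixed unitary channel on A and a channel on B. -/
theorem stmt_2 {mA mB : Type*} [Fintype mA] [DecidableEq mA] [Fintype mB] [DecidableEq mB]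
    (N : Matrix (mA × mB) (mA × mB) ℂ →ₗ[ℂ] Matrix (mA × mB) (mA × mB) ℂ)
    (hN : IsCPTP N)
    (hall : ∀ ν : mB → ℂ, star ν ⬝ᵥ ν = 1 →
      ∃ U : Matrix mA mA ℂ, IsUnitary U ∧
        ∀ ρ : Matrix mA mA ℂ,
          ptraceB (N (ρ ⊗ₖ Matrix.vecMulVec ν (star ν))) = U * ρ * Uᴴ) :
    ∃ (U : Matrix mA mA ℂ) (NB : Matrix mB mB ℂ →ₗ[ℂ] Matrix mB mB ℂ),
      IsUnitary U ∧ IsCPTP NB ∧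
      ∀ (X : Matrix mA mA ℂ) (Y : Matrix mB mB ℂ),
        N (X ⊗ₖ Y) = (U * X * Uᴴ) ⊗ₖ (NB Y) := by
  -- trivial cases first
  rcases isEmpty_or_nonempty mA with hmA | hmA
  · refine ⟨1, LinearMap.id, ⟨by simp, by simp⟩,
      ⟨fun X => rfl, 1, fun _ => 1, fun X => by simp⟩, fun X Y => ?_⟩
    ext i j
    exact (hmA.false i.1).elim
  rcases isEmpty_or_nonempty mB with hmB | hmB
  · refine ⟨1, 0, ⟨by simp, by simp⟩,
      ⟨fun X => by simp [Matrix.trace], 0, Fin.elim0, fun X => by simp⟩, fun X Y => ?_⟩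
    ext i j
    exact (hmB.false i.2).elim
  -- main case
  obtain ⟨hTP, k, K, hK⟩ := hN
  have E1 : ∀ (ν : mB → ℂ) (ρ : Matrix mA mA ℂ),
      ptraceB (N (ρ ⊗ₖ Matrix.vecMulVec ν (star ν)))
        = ∑ j : Fin k × mB, Am (K j.1) j.2 ν * ρ * (Am (K j.1) j.2 ν)ᴴ := by
    intro ν ρ
    calc ptraceB (N (ρ ⊗ₖ Matrix.vecMulVec ν (star ν)))
        = ∑ r, ((Pm (mA := mA) r : Matrix mA (mA × mB) ℂ) * (∑ i, K i * (Qm (mA := mA) ν * ρ * (Qm (mA := mA) ν)ᴴ) * (K i)ᴴ) * (Pm (mA := mA) r)ᴴ : Matrix mA mA ℂ) := by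
          rw [F2, hK, F1]
      _ = ∑ r, ∑ i, ((Pm (mA := mA) r : Matrix mA (mA × mB) ℂ) * (K i * (Qm (mA := mA) ν * ρ * (Qm (mA := mA) ν)ᴴ) * (K i)ᴴ) * (Pm (mA := mA) r)ᴴ : Matrix mA mA ℂ) := by
          refine Finset.sum_congr rfl fun r _ => ?_
          rw [Matrix.mul_sum, Matrix.sum_mul]
      _ = ∑ j : Fin k × mB, Am (K j.1) j.2 ν * ρ * (Am (K j.1) j.2 ν)ᴴ := by
          rw [Fintype.sum_prod_type, Finset.sum_comm]
          refine Finset.sum_congr rfl fun r _ => Finset.sum_congr rfl fun i _ => ?_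
          rw [← F3, conjTranspose_mul, conjTranspose_mul]
          simp only [Matrix.mul_assoc]
  have EQ : ∀ ν μ : mB → ℂ, ∑ j : Fin k × mB, (Am (K j.1) j.2 ν)ᴴ * Am (K j.1) j.2 μ
      = (star ν ⬝ᵥ μ) • (1 : Matrix mA mA ℂ) := by
    intro ν μ
    apply trace_forall_eq
    intro ρ
    have hsum : ∑ j : Fin k × mB, (Am (K j.1) j.2 ν)ᴴ * Am (K j.1) j.2 μ
        = ∑ i : Fin k, (Qm (mA := mA) ν)ᴴ * (K i)ᴴ * (K i * (Qm (mA := mA) μ : Matrix (mA × mB) mA ℂ)) := by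
      rw [Fintype.sum_prod_type]
      refine Finset.sum_congr rfl fun i _ => ?_
      calc ∑ r, (Am (K i) r ν)ᴴ * Am (K i) r μ
          = ∑ r, ((Qm (mA := mA) ν)ᴴ * (K i)ᴴ * ((Pm (mA := mA) r)ᴴ * Pm (mA := mA) r : Matrix (mA × mB) (mA × mB) ℂ) * (K i * (Qm (mA := mA) μ : Matrix (mA × mB) mA ℂ)) : Matrix mA mA ℂ) := by
            refine Finset.sum_congr rfl fun r _ => ?_
            rw [← F3, ← F3, conjTranspose_mul, conjTranspose_mul]
            simp only [Matrix.mul_assoc]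
        _ = ((Qm (mA := mA) ν)ᴴ * (K i)ᴴ * (∑ r, (Pm (mA := mA) r)ᴴ * Pm (mA := mA) r : Matrix (mA × mB) (mA × mB) ℂ) * (K i * (Qm (mA := mA) μ : Matrix (mA × mB) mA ℂ)) : Matrix mA mA ℂ) := by
            rw [Matrix.mul_sum, Matrix.sum_mul]
        _ = ((Qm (mA := mA) ν)ᴴ * (K i)ᴴ * (K i * (Qm (mA := mA) μ : Matrix (mA × mB) mA ℂ)) : Matrix mA mA ℂ) := by rw [F4, Matrix.mul_one]
    calc ((∑ j : Fin k × mB, (Am (K j.1) j.2 ν)ᴴ * Am (K j.1) j.2 μ) * ρ).trace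
        = ∑ i : Fin k, ((Qm (mA := mA) ν)ᴴ * (K i)ᴴ * (K i * (Qm (mA := mA) μ : Matrix (mA × mB) mA ℂ)) * ρ).trace := by
          rw [hsum, Matrix.sum_mul, Matrix.trace_sum]
      _ = ∑ i : Fin k, (K i * (Qm (mA := mA) μ * ρ * (Qm (mA := mA) ν)ᴴ) * (K i)ᴴ).trace := by
          refine Finset.sum_congr rfl fun i _ => ?_
          rw [show (Qm (mA := mA) ν)ᴴ * (K i)ᴴ * (K i * (Qm (mA := mA) μ : Matrix (mA × mB) mA ℂ)) * ρ
              = ((Qm (mA := mA) ν)ᴴ * (K i)ᴴ) * (K i * (Qm (mA := mA) μ : Matrix (mA × mB) mA ℂ) * ρ) by simp only [Matrix.mul_assoc]]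
          rw [Matrix.trace_mul_comm]
          congr 1
          simp only [Matrix.mul_assoc]
      _ = (N (ρ ⊗ₖ Matrix.vecMulVec μ (star ν))).trace := by
          rw [hK, Matrix.trace_sum, F2]
      _ = (ρ ⊗ₖ Matrix.vecMulVec μ (star ν)).trace := hTP _
      _ = (star ν ⬝ᵥ μ) * ρ.trace := by
          rw [Matrix.trace_kronecker]
          have hvv : (Matrix.vecMulVec μ (star ν)).trace = star ν ⬝ᵥ μ := by
            simp [Matrix.trace, Matrix.vecMulVec_apply, dotProduct, Matrix.diag, mul_comm]
          rw [hvv, mul_comm]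
  have hA : ∀ ν : mB → ℂ, star ν ⬝ᵥ ν = 1 →
      ∃ U : Matrix mA mA ℂ, IsUnitary U ∧
        ∀ j : Fin k × mB, ∃ c : ℂ, Am (K j.1) j.2 ν = c • U := by
    intro ν hν
    obtain ⟨U, hU, hUρ⟩ := hall ν hν
    exact ⟨U, hU, kraus_unitary _ U ⟨hU.1, hU.2⟩ (fun ρ => by rw [← E1 ν ρ, hUρ])⟩
  have step : ∀ (ν μ : mB → ℂ) (U V : Matrix mA mA ℂ), star ν ⬝ᵥ μ ≠ 0 →
      IsUnitary U → (∀ j : Fin k × mB, ∃ c : ℂ, Am (K j.1) j.2 ν = c • U) →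
      (∀ j : Fin k × mB, ∃ c : ℂ, Am (K j.1) j.2 μ = c • V) →
      ∃ γ : ℂ, V = γ • U := by
    intro ν μ U V hov hU hcU hcV
    choose cν hcν using hcU
    choose cμ hcμ using hcV
    set s : ℂ := ∑ j : Fin k × mB, star (cν j) * cμ j with hs
    have hQ : (star ν ⬝ᵥ μ) • (1 : Matrix mA mA ℂ) = s • (Uᴴ * V) := by
      rw [← EQ ν μ, hs, Finset.sum_smul]
      refine Finset.sum_congr rfl fun j _ => ?_
      rw [hcν j, hcμ j, Matrix.conjTranspose_smul, Matrix.smul_mul, Matrix.mul_smul, smul_smul]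
    obtain ⟨a₀⟩ := hmA
    have hsne : s ≠ 0 := by
      intro h0
      rw [h0, zero_smul] at hQ
      have h1 := congr_fun (congr_fun hQ a₀) a₀
      simp [Matrix.smul_apply, Matrix.one_apply] at h1
      exact hov h1
    have hUV : Uᴴ * V = (s⁻¹ * (star ν ⬝ᵥ μ)) • 1 := by
      calc Uᴴ * V = (s⁻¹ * s) • (Uᴴ * V) := by rw [inv_mul_cancel₀ hsne, one_smul]
        _ = s⁻¹ • ((star ν ⬝ᵥ μ) • (1 : Matrix mA mA ℂ)) := by rw [hQ, smul_smul]
        _ = (s⁻¹ * (star ν ⬝ᵥ μ)) • 1 := by rw [smul_smul]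
    refine ⟨s⁻¹ * (star ν ⬝ᵥ μ), ?_⟩
    calc V = U * (Uᴴ * V) := by rw [← Matrix.mul_assoc, hU.1, Matrix.one_mul]
      _ = U * ((s⁻¹ * (star ν ⬝ᵥ μ)) • 1) := by rw [hUV]
      _ = (s⁻¹ * (star ν ⬝ᵥ μ)) • U := by rw [Matrix.mul_smul, Matrix.mul_one]
  obtain ⟨b₀⟩ := hmB
  have hν₀ : star (Pi.single b₀ 1 : mB → ℂ) ⬝ᵥ (Pi.single b₀ 1 : mB → ℂ) = 1 := by
    simp [dotProduct, Pi.single_apply, apply_ite (star : ℂ → ℂ), ite_mul,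
      Finset.sum_ite_eq', Finset.sum_ite_eq]
  obtain ⟨U, hU, hcU⟩ := hA (Pi.single b₀ 1) hν₀
  have main : ∀ ν : mB → ℂ, star ν ⬝ᵥ ν = 1 →
      ∀ j : Fin k × mB, ∃ c : ℂ, Am (K j.1) j.2 ν = c • U := by
    intro ν hν
    obtain ⟨V, hV, hcV⟩ := hA ν hν
    by_cases hov : star (Pi.single b₀ 1 : mB → ℂ) ⬝ᵥ ν = 0
    · have hov' : star ν ⬝ᵥ (Pi.single b₀ 1 : mB → ℂ) = 0 := by
        rw [Matrix.star_dotProduct, hov, star_zero]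
      set c2 : ℂ := ((Real.sqrt 2 : ℝ) : ℂ)⁻¹ with hc2
      have hc2ne : c2 ≠ 0 := by
        rw [hc2]
        refine inv_ne_zero ?_
        exact_mod_cast Real.sqrt_ne_zero'.mpr (by norm_num)
      have hc2conj : star c2 = c2 := by
        rw [hc2]
        simp [Complex.star_def, map_inv₀, Complex.conj_ofReal]
      have hc22 : c2 * c2 * 2 = 1 := by
        have hss : ((Real.sqrt 2 : ℝ) : ℂ) * ((Real.sqrt 2 : ℝ) : ℂ) = 2 := by
          rw [← Complex.ofReal_mul, Real.mul_self_sqrt (by norm_num)]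
          norm_num
        rw [hc2, ← mul_inv, hss]
        norm_num
      set τ : mB → ℂ := c2 • ((Pi.single b₀ 1 : mB → ℂ) + ν) with hτ
      have hsτ : star τ = c2 • (star (Pi.single b₀ 1 : mB → ℂ) + star ν) := by
        rw [hτ, star_smul, hc2conj, star_add]
      have hττ : star τ ⬝ᵥ τ = 1 := by
        rw [hτ, hsτ, smul_dotProduct, dotProduct_smul, add_dotProduct, dotProduct_add,
          dotProduct_add, hν₀, hν, hov, hov']
        simp only [smul_eq_mul]
        linear_combination hc22
      have hov1 : star (Pi.single b₀ 1 : mB → ℂ) ⬝ᵥ τ ≠ 0 := by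
        rw [hτ, dotProduct_smul, dotProduct_add, hν₀, hov]
        simpa using hc2ne
      have hov2 : star τ ⬝ᵥ ν ≠ 0 := by
        rw [hsτ, smul_dotProduct, add_dotProduct, hov, hν]
        simpa using hc2ne
      obtain ⟨W, hW, hcW⟩ := hA τ hττ
      obtain ⟨γ₁, hγ₁⟩ := step (Pi.single b₀ 1) τ U W hov1 hU hcU hcW
      obtain ⟨γ₂, hγ₂⟩ := step τ ν W V hov2 hW hcW hcV
      intro j; obtain ⟨c, hc⟩ := hcV j
      refine ⟨c * (γ₂ * γ₁), ?_⟩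
      rw [hc, hγ₂, hγ₁, smul_smul, smul_smul, mul_assoc]
    · obtain ⟨γ, hγ⟩ := step (Pi.single b₀ 1) ν U V hov hU hcU hcV
      intro j; obtain ⟨c, hc⟩ := hcV j
      exact ⟨c * γ, by rw [hc, hγ, smul_smul]⟩
  have hAll : ∀ (ν : mB → ℂ) (j : Fin k × mB), ∃ c : ℂ, Am (K j.1) j.2 ν = c • U := by
    intro ν j
    by_cases hν : ν = 0
    · refine ⟨0, ?_⟩
      rw [hν, zero_smul]
      ext a b
      simp [Am]
    · have hdne : star ν ⬝ᵥ ν ≠ 0 := fun h0 => hν (dotProduct_star_self_eq_zero.mp h0)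
      have hreal : star ν ⬝ᵥ ν = ((∑ sx, Complex.normSq (ν sx) : ℝ) : ℂ) := by
        rw [dotProduct]
        push_cast
        refine Finset.sum_congr rfl fun sx _ => ?_
        rw [Pi.star_apply, Complex.star_def, ← Complex.normSq_eq_conj_mul_self]
      set R : ℝ := ∑ sx, Complex.normSq (ν sx) with hRdef
      have hRne : R ≠ 0 := by
        intro h0
        exact hdne (by rw [hreal, h0, Complex.ofReal_zero])
      have hRpos : 0 < R :=
        lt_of_le_of_ne (Finset.sum_nonneg fun _ _ => Complex.normSq_nonneg _) (Ne.symm hRne)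
      set t : ℝ := Real.sqrt R with htdef
      have htne : (t : ℂ) ≠ 0 := by
        rw [htdef]
        exact_mod_cast Real.sqrt_ne_zero'.mpr hRpos
      have htt : (t : ℂ) * t = (R : ℂ) := by
        rw [htdef, ← Complex.ofReal_mul, Real.mul_self_sqrt hRpos.le]
      have hν'1 : star ((t : ℂ)⁻¹ • ν) ⬝ᵥ ((t : ℂ)⁻¹ • ν) = 1 := by
        rw [star_smul, smul_dotProduct, dotProduct_smul, hreal]
        have hstar : star ((t : ℂ)⁻¹) = (t : ℂ)⁻¹ := by
          simp [Complex.star_def, map_inv₀, Complex.conj_ofReal]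
        rw [hstar]
        simp only [smul_eq_mul]
        rw [← htt]
        field_simp
      obtain ⟨c, hc⟩ := main ((t : ℂ)⁻¹ • ν) hν'1 j
      refine ⟨(t : ℂ) * c, ?_⟩
      have hback : ν = (t : ℂ) • ((t : ℂ)⁻¹ • ν) := by
        rw [smul_smul, mul_inv_cancel₀ htne, one_smul]
      rw [hback, Am_smul, hc, smul_smul]
  choose cf hcf using hAll
  set B : Fin k → Matrix mB mB ℂ := fun i => Matrix.of fun r sx => cf (Pi.single sx 1) (i, r)
    with hB
  have hKB : ∀ i, K i = U ⊗ₖ B i := by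
    intro i
    ext ⟨a, r⟩ ⟨b, sx⟩
    have h1 := congr_fun (congr_fun (hcf (Pi.single sx 1) (i, r)) a) b
    rw [Am_single] at h1
    rw [h1]
    simp [hB, kroneckerMap_apply, Matrix.smul_apply, mul_comm]
  set NB : Matrix mB mB ℂ →ₗ[ℂ] Matrix mB mB ℂ :=
    { toFun := fun Y => ∑ i, B i * Y * (B i)ᴴ,
      map_add' := by
        intro Y Z
        simp [Matrix.mul_add, Matrix.add_mul, Finset.sum_add_distrib],
      map_smul' := by
        intro c Y
        simp [Finset.smul_sum, Matrix.mul_smul, Matrix.smul_mul] } with hNB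
  have hprod : ∀ (X : Matrix mA mA ℂ) (Y : Matrix mB mB ℂ),
      N (X ⊗ₖ Y) = (U * X * Uᴴ) ⊗ₖ (NB Y) := by
    intro X Y
    rw [hK]
    have hterm : ∀ i : Fin k, K i * (X ⊗ₖ Y) * (K i)ᴴ
        = (U * X * Uᴴ) ⊗ₖ (B i * Y * (B i)ᴴ) := by
      intro i
      rw [hKB i, kron_conjTranspose, Matrix.mul_kronecker_mul, Matrix.mul_kronecker_mul]
    rw [Finset.sum_congr rfl fun i _ => hterm i]
    ext ⟨a, r⟩ ⟨b, sx⟩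
    rw [Matrix.sum_apply]
    simp only [kroneckerMap_apply, hNB, LinearMap.coe_mk, AddHom.coe_mk, Matrix.sum_apply,
      Finset.mul_sum]
  have hTPB : ∀ Y : Matrix mB mB ℂ, (NB Y).trace = Y.trace := by
    intro Y
    obtain ⟨a₀⟩ := hmA
    have h1 := hTP ((Matrix.single a₀ a₀ 1) ⊗ₖ Y)
    rw [hprod, Matrix.trace_kronecker, Matrix.trace_kronecker] at h1
    have h2 : (U * (Matrix.single a₀ a₀ 1) * Uᴴ).trace
        = (Matrix.single a₀ a₀ 1 : Matrix mA mA ℂ).trace := by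
      rw [Matrix.trace_mul_cycle, hU.2, Matrix.one_mul]
    have h3 : (Matrix.single a₀ a₀ 1 : Matrix mA mA ℂ).trace = 1 := by
      simp [Matrix.trace, Matrix.single, Matrix.diag, Finset.sum_ite_eq,
        Finset.sum_ite_eq', ite_and]
    rw [h2, h3, one_mul, one_mul] at h1
    exact h1
  exact ⟨U, NB, hU, ⟨hTPB, k, B, fun Y => rfl⟩, hprod⟩
end
end

section
/- No-cloning theorem (finite dimension ≥ 2): Let H_A be a finite-dimensional Hilbert space with dim H_A ≥ 2 and let ξ be a fixed state on H_B ≅ H_A. There is no quantum channel N on H_A ⊗ H_B such that N(ρ ⊗ ξ) = ρ ⊗ ρ for all states ρ on H_A. -/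
open Matrix BigOperators
open scoped Kronecker ComplexOrder

noncomputable section

/-- No-cloning theorem. -/
theorem stmt_3 {mA : Type*} [Fintype mA] [DecidableEq mA]
    (hdim : 2 ≤ Fintype.card mA)
    (ξ : Matrix mA mA ℂ) (hξ : IsState ξ) :
    ¬ ∃ N : Matrix (mA × mA) (mA × mA) ℂ →ₗ[ℂ] Matrix (mA × mA) (mA × mA) ℂ,
        IsCPTP N ∧ ∀ ρ : Matrix mA mA ℂ, IsState ρ → N (ρ ⊗ₖ ξ) = ρ ⊗ₖ ρ := by
  rintro ⟨N, -, hN⟩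
  obtain ⟨i, j, hij⟩ := Fintype.exists_pair_of_one_lt_card (α := mA) (by omega)
  have hstate : ∀ (k : mA), ((diagonal (Pi.single k 1) : Matrix mA mA ℂ).PosSemidef ∧
      (diagonal (Pi.single k 1) : Matrix mA mA ℂ).trace = 1) := by
    intro k
    constructor
    · rw [Matrix.posSemidef_diagonal_iff]
      intro a
      by_cases h : a = k <;> simp [h, Pi.single_apply]
    · simp [Matrix.trace_diagonal]
  have hmix : ((diagonal ((1/2 : ℂ) • (Pi.single i 1 + Pi.single j 1)) : Matrix mA mA ℂ).PosSemidef ∧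
      (diagonal ((1/2 : ℂ) • (Pi.single i 1 + Pi.single j 1)) : Matrix mA mA ℂ).trace = 1) := by
    constructor
    · rw [Matrix.posSemidef_diagonal_iff]
      intro a
      simp only [Pi.smul_apply, Pi.add_apply, smul_eq_mul, Pi.single_apply]
      split <;> split <;> norm_num [Complex.le_def]
    · simp only [Matrix.trace_diagonal, Pi.smul_apply, Pi.add_apply, smul_eq_mul,
        ← Finset.mul_sum, Finset.sum_add_distrib, Finset.sum_pi_single']
      norm_num
  have h0 := hN _ (hstate i)
  have h1 := hN _ (hstate j)
  have h2 := hN _ hmix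
  have hsplit : (diagonal (Pi.single i (1:ℂ) + Pi.single j 1) : Matrix mA mA ℂ)
      = diagonal (Pi.single i 1) + diagonal (Pi.single j 1) := by
    ext a b
    by_cases h : a = b <;> simp [h, Matrix.diagonal_apply]
  have hlin : (diagonal ((1/2 : ℂ) • (Pi.single i 1 + Pi.single j 1)) : Matrix mA mA ℂ) ⊗ₖ ξ
      = (1/2 : ℂ) • ((diagonal (Pi.single i 1) : Matrix mA mA ℂ) ⊗ₖ ξ)
        + (1/2 : ℂ) • ((diagonal (Pi.single j 1) : Matrix mA mA ℂ) ⊗ₖ ξ) := by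
    rw [Matrix.diagonal_smul, Matrix.smul_kronecker, hsplit, Matrix.add_kronecker, smul_add]
  rw [hlin, map_add, _root_.map_smul, _root_.map_smul, h0, h1] at h2
  have h3 := congrFun (congrFun h2 (i, j)) (i, j)
  simp only [Matrix.add_apply, Matrix.smul_apply, Matrix.kroneckerMap_apply,
    Matrix.diagonal_apply, Pi.smul_apply, Pi.add_apply,
    Pi.single_apply, if_pos rfl, if_neg hij, if_neg (Ne.symm hij), smul_eq_mul] at h3
  norm_num at h3
end
end

section
/- No-broadcasting theorem (finite dimension ≥ 2): Let H_A ≅ H_B be finite-dimensional with dimension ≥ 2 and let ξ be a fixed state on H_B. There is no quantum channel N on H_A ⊗ H_B such that for every state ρ on H_A, the output ρ̃ = N(ρ ⊗ ξ) satisfies Tr_A[ρ̃] = ρ and Tr_B[ρ̃] = ρ. -/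
open Matrix BigOperators
open scoped Kronecker ComplexOrder

noncomputable section

lemma psd_mulVec_eq_zero {n : Type*} [Fintype n] [DecidableEq n] {M : Matrix n n ℂ}
    (hM : M.PosSemidef) {v : n → ℂ} (h : dotProduct (star v) (M *ᵥ v) = 0) :
    M *ᵥ v = 0 := by
  obtain ⟨B, rfl⟩ := (by open scoped MatrixOrder in exact CStarAlgebra.nonneg_iff_eq_star_mul_self.mp hM.nonneg : ∃ B : Matrix n n ℂ, M = Bᴴ * B)
  have h2 : dotProduct (star (B *ᵥ v)) (B *ᵥ v) = 0 := by
    rw [star_mulVec, ← Matrix.dotProduct_mulVec, Matrix.mulVec_mulVec]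
    exact h
  have h3 : B *ᵥ v = 0 := dotProduct_star_self_eq_zero.mp h2
  rw [← Matrix.mulVec_mulVec, h3, Matrix.mulVec_zero]

lemma kron_conjTranspose_s4 {a b c d : Type*} (A : Matrix a b ℂ) (B : Matrix c d ℂ) :
    (A ⊗ₖ B)ᴴ = Aᴴ ⊗ₖ Bᴴ := by
  ext ⟨i, j⟩ ⟨p, q⟩
  simp [Matrix.conjTranspose_apply, Matrix.kroneckerMap_apply]

lemma kron_psd {a b : Type*} [Fintype a] [Fintype b] [DecidableEq a] [DecidableEq b]
    {A : Matrix a a ℂ} {B : Matrix b b ℂ} (hA : A.PosSemidef) (hB : B.PosSemidef) :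
    (A ⊗ₖ B).PosSemidef := by
  obtain ⟨P, rfl⟩ := (by open scoped MatrixOrder in exact CStarAlgebra.nonneg_iff_eq_star_mul_self.mp hA.nonneg : ∃ P : Matrix a a ℂ, A = Pᴴ * P)
  obtain ⟨Q, rfl⟩ := (by open scoped MatrixOrder in exact CStarAlgebra.nonneg_iff_eq_star_mul_self.mp hB.nonneg : ∃ Q : Matrix b b ℂ, B = Qᴴ * Q)
  rw [Matrix.mul_kronecker_mul, ← kron_conjTranspose_s4]
  exact Matrix.posSemidef_conjTranspose_mul_self _

lemma pure_entries {a : Type*} [Fintype a] [DecidableEq a]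
    {M : Matrix (a × a) (a × a) ℂ} (hM : M.PosSemidef)
    {ψ : a → ℂ} (hψ : ∑ q, star (ψ q) * ψ q = 1)
    (hB : ptraceB M = Matrix.of fun i j => ψ i * star (ψ j)) :
    ∀ i k j l, M (i, k) (j, l)
      = ψ i * star (ψ j) * ∑ p, ∑ q, star (ψ p) * M (p, k) (q, l) * ψ q := by
  have mv : ∀ (w : a → ℂ) (k : a) (x : a × a),
      (M *ᵥ (fun p : a × a => if p.2 = k then w p.1 else 0)) x = ∑ q, M x (q, k) * w q := by
    intro w k x
    simp [Matrix.mulVec, dotProduct, Fintype.sum_prod_type, mul_ite, mul_zero,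
      Finset.sum_ite_eq']
  have h1 : ∀ i q, ∑ k', M (i, k') (q, k') = ψ i * star (ψ q) := by
    intro i q
    simpa [ptraceB] using congrFun (congrFun hB i) q
  have key : ∀ (j k : a) (x : a × a),
      M x (j, k) = star (ψ j) * ∑ q, M x (q, k) * ψ q := by
    intro j k x
    set φ : a → ℂ := fun q => (if q = j then 1 else 0) - star (ψ j) * ψ q with hφ
    have horth : ∑ q, star (ψ q) * φ q = 0 := by
      have he : ∀ q, star (ψ q) * φ q
          = (if q = j then star (ψ q) else 0) - star (ψ j) * (star (ψ q) * ψ q) := by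
        intro q; simp only [hφ]; split_ifs <;> ring
      rw [Finset.sum_congr rfl fun q _ => he q, Finset.sum_sub_distrib,
        Finset.sum_ite_eq', ← Finset.mul_sum, hψ]
      simp
    set v : a → a × a → ℂ := fun k' => (fun p => if p.2 = k' then φ p.1 else 0) with hv
    have hQ : ∀ k', dotProduct (star (v k')) (M *ᵥ v k')
        = ∑ i, star (φ i) * ∑ q, M (i, k') (q, k') * φ q := by
      intro k'
      have hd : ∀ u : a × a → ℂ, dotProduct (star (v k')) u = ∑ i, star (φ i) * u (i, k') := by
        intro u
        simp [dotProduct, Fintype.sum_prod_type, hv, apply_ite (star : ℂ → ℂ),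
          ite_mul, zero_mul, Finset.sum_ite_eq']
      rw [hd]
      exact Finset.sum_congr rfl fun i _ => by rw [mv φ k' (i, k')]
    have hsum : ∑ k', dotProduct (star (v k')) (M *ᵥ v k') = 0 := by
      rw [Finset.sum_congr rfl fun k' _ => hQ k', Finset.sum_comm]
      have hi : ∀ i, ∑ k', star (φ i) * ∑ q, M (i, k') (q, k') * φ q = 0 := by
        intro i
        rw [← Finset.mul_sum, Finset.sum_comm]
        have hq : ∑ q, ∑ k', M (i, k') (q, k') * φ q = ψ i * ∑ q, star (ψ q) * φ q := by
          rw [Finset.mul_sum]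
          refine Finset.sum_congr rfl fun q _ => ?_
          rw [← Finset.sum_mul, h1 i q]; ring
        rw [hq, horth, mul_zero, mul_zero]
      rw [Finset.sum_congr rfl fun i _ => hi i]
      simp
    have hQ0 : dotProduct (star (v k)) (M *ᵥ v k) = 0 :=
      (Finset.sum_eq_zero_iff_of_nonneg (fun k' _ => hM.dotProduct_mulVec_nonneg (v k'))).mp hsum k
        (Finset.mem_univ _)
    have hMv : M *ᵥ v k = 0 := psd_mulVec_eq_zero hM hQ0
    have h0 : ∑ q, M x (q, k) * φ q = 0 := by
      rw [← mv φ k x]; exact congrFun hMv x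
    have hexp : ∑ q, M x (q, k) * φ q
        = M x (j, k) - star (ψ j) * ∑ q, M x (q, k) * ψ q := by
      have he : ∀ q, M x (q, k) * φ q
          = (if q = j then M x (q, k) else 0) - star (ψ j) * (M x (q, k) * ψ q) := by
        intro q; simp only [hφ]; split_ifs <;> ring
      rw [Finset.sum_congr rfl fun q _ => he q, Finset.sum_sub_distrib,
        Finset.sum_ite_eq', ← Finset.mul_sum]
      simp
    rw [hexp] at h0
    linear_combination h0
  have hHerm : ∀ x y, star (M y x) = M x y := by
    intro x y
    rw [← Matrix.conjTranspose_apply, hM.1.eq]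
  have key2 : ∀ (i k : a) (y : a × a), M (i, k) y = ψ i * ∑ p, star (ψ p) * M (p, k) y := by
    intro i k y
    calc M (i, k) y = star (M y (i, k)) := (hHerm _ _).symm
      _ = star (star (ψ i) * ∑ q, M y (q, k) * ψ q) := by rw [← key i k y]
      _ = ψ i * ∑ p, star (ψ p) * M (p, k) y := by
          rw [star_mul', star_star, star_sum]
          congr 1
          refine Finset.sum_congr rfl fun p _ => ?_
          rw [star_mul', hHerm]; ring
  intro i k j l
  rw [key2 i k (j, l)]
  have hp : ∀ p, star (ψ p) * M (p, k) (j, l)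
      = star (ψ j) * ∑ q, star (ψ p) * M (p, k) (q, l) * ψ q := by
    intro p
    rw [key j l (p, k)]
    simp only [Finset.mul_sum]
    exact Finset.sum_congr rfl fun q _ => by ring
  rw [Finset.sum_congr rfl fun p _ => hp p, ← Finset.mul_sum]
  ring

/-- No-broadcasting theorem. -/
theorem stmt_4 {mA : Type*} [Fintype mA] [DecidableEq mA]
    (hdim : 2 ≤ Fintype.card mA)
    (ξ : Matrix mA mA ℂ) (hξ : IsState ξ) :
    ¬ ∃ N : Matrix (mA × mA) (mA × mA) ℂ →ₗ[ℂ] Matrix (mA × mA) (mA × mA) ℂ,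
        IsCPTP N ∧ ∀ ρ : Matrix mA mA ℂ, IsState ρ →
          ptraceA (N (ρ ⊗ₖ ξ)) = ρ ∧ ptraceB (N (ρ ⊗ₖ ξ)) = ρ := by
  rintro ⟨N, ⟨htr, k, K, hK⟩, hbr⟩
  obtain ⟨a0, a1, hne⟩ := Fintype.exists_pair_of_one_lt_card
    (show 1 < Fintype.card mA by omega)
  have hne' : a1 ≠ a0 := hne.symm
  -- the main structural fact about broadcasting pure states
  have main : ∀ ψ : mA → ℂ, (∑ q, star (ψ q) * ψ q = 1) →
      ∀ i k' j l, N ((Matrix.of fun i j => ψ i * star (ψ j)) ⊗ₖ ξ) (i, k') (j, l)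
        = ψ i * star (ψ j) * (ψ k' * star (ψ l)) := by
    intro ψ hψ
    set ρ : Matrix mA mA ℂ := Matrix.of fun i j => ψ i * star (ψ j) with hρ
    have hρpsd : ρ.PosSemidef := by
      refine Matrix.PosSemidef.of_dotProduct_mulVec_nonneg ?_ ?_
      · ext i j
        simp only [Matrix.conjTranspose_apply, hρ, Matrix.of_apply, star_mul', star_star]
        ring
      · intro x
        have e1 : dotProduct (star x) (ρ *ᵥ x)
            = (∑ i, star (x i) * ψ i) * (∑ j, star (ψ j) * x j) := by
          simp only [dotProduct, Matrix.mulVec, Pi.star_apply, hρ, Matrix.of_apply]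
          rw [Finset.sum_mul]
          refine Finset.sum_congr rfl fun i _ => ?_
          rw [Finset.mul_sum, Finset.mul_sum]
          refine Finset.sum_congr rfl fun j _ => ?_
          ring
        have e2 : (∑ i, star (x i) * ψ i) = star (∑ j, star (ψ j) * x j) := by
          rw [star_sum]
          refine Finset.sum_congr rfl fun j _ => ?_
          rw [star_mul', star_star]; ring
        rw [e1, e2]
        exact star_mul_self_nonneg _
    have hρtr : ρ.trace = 1 := by
      rw [Matrix.trace, ← hψ]
      refine Finset.sum_congr rfl fun i _ => ?_
      simp only [Matrix.diag_apply, hρ, Matrix.of_apply]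
      ring
    obtain ⟨hA', hB'⟩ := hbr ρ ⟨hρpsd, hρtr⟩
    have hMpsd : (N (ρ ⊗ₖ ξ)).PosSemidef := by
      rw [hK]
      exact psd_sum _ _ fun i _ => (kron_psd hρpsd hξ.1).mul_mul_conjTranspose_same _
    have hent := pure_entries hMpsd hψ (hB'.trans hρ)
    have hAkl : ∀ k'' l'', ∑ p, N (ρ ⊗ₖ ξ) (p, k'') (p, l'') = ψ k'' * star (ψ l'') := by
      intro k'' l''
      have := congrFun (congrFun hA' k'') l''
      simpa [ptraceA, hρ] using this
    have hC : ∀ k'' l'', (∑ p, ∑ q, star (ψ p) * N (ρ ⊗ₖ ξ) (p, k'') (q, l'') * ψ q)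
        = ψ k'' * star (ψ l'') := by
      intro k'' l''
      have h2 := hAkl k'' l''
      rw [Finset.sum_congr rfl fun p (_ : p ∈ Finset.univ) => hent p k'' p l'',
        ← Finset.sum_mul] at h2
      have hone : (∑ p, ψ p * star (ψ p)) = 1 := by
        rw [← hψ]; exact Finset.sum_congr rfl fun p _ => mul_comm _ _
      rwa [hone, one_mul] at h2
    intro i k' j l
    rw [hent i k' j l, hC k' l]
  -- the four pure states
  set v : ℂ → ℂ → mA → ℂ := fun c d i => if i = a0 then c else if i = a1 then d else 0 with hv
  have hnorm : ∀ c d : ℂ, (∑ q, star (v c d q) * v c d q) = star c * c + star d * d := by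
    intro c d
    have he : ∀ q, star (v c d q) * v c d q
        = (if q = a0 then star c * c else 0) + (if q = a1 then star d * d else 0) := by
      intro q
      by_cases h1 : q = a0
      · subst h1; simp [hv, hne]
      · by_cases h2 : q = a1 <;> simp [hv, h1, h2, hne']
    rw [Finset.sum_congr rfl fun q _ => he q, Finset.sum_add_distrib,
      Finset.sum_ite_eq', Finset.sum_ite_eq']
    simp
  set r : ℂ := (((Real.sqrt 2)⁻¹ : ℝ) : ℂ) with hr
  have hrstar : star r = r := by
    rw [hr]; exact Complex.conj_ofReal _
  have hr2 : r * r = (2:ℂ)⁻¹ := by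
    rw [hr, ← Complex.ofReal_mul, ← mul_inv, Real.mul_self_sqrt (by norm_num)]
    norm_num
  have hr2' : r ^ 2 = (2:ℂ)⁻¹ := by rw [sq, hr2]
  have hn10 : (∑ q, star (v 1 0 q) * v 1 0 q) = 1 := by rw [hnorm]; simp
  have hn01 : (∑ q, star (v 0 1 q) * v 0 1 q) = 1 := by rw [hnorm]; simp
  have hnpp : (∑ q, star (v r r q) * v r r q) = 1 := by
    rw [hnorm, hrstar, hr2]; norm_num
  have hnpm : (∑ q, star (v r (-r) q) * v r (-r) q) = 1 := by
    rw [hnorm, hrstar, star_neg, hrstar]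
    ring_nf
    rw [hr2']; norm_num
  -- ρ0 + ρ1 = ρ+ + ρ-
  have hsumρ : (Matrix.of fun i j => v 1 0 i * star (v 1 0 j))
        + (Matrix.of fun i j => v 0 1 i * star (v 0 1 j))
      = (Matrix.of fun i j => v r r i * star (v r r j))
        + (Matrix.of fun i j => v r (-r) i * star (v r (-r) j)) := by
    ext i j
    simp only [Matrix.add_apply, Matrix.of_apply, hv]
    by_cases h1 : i = a0 <;> by_cases h3 : i = a1 <;> by_cases h2 : j = a0 <;>
      by_cases h4 : j = a1 <;>
      (try simp [h1, h2, h3, h4, hne, hne', hrstar, star_neg]) <;>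
      (try ring_nf) <;> (try rw [hr2']) <;> (try norm_num)
  have hlin : N ((Matrix.of fun i j => v 1 0 i * star (v 1 0 j)) ⊗ₖ ξ)
        + N ((Matrix.of fun i j => v 0 1 i * star (v 0 1 j)) ⊗ₖ ξ)
      = N ((Matrix.of fun i j => v r r i * star (v r r j)) ⊗ₖ ξ)
        + N ((Matrix.of fun i j => v r (-r) i * star (v r (-r) j)) ⊗ₖ ξ) := by
    rw [← map_add, ← map_add, ← Matrix.add_kronecker, ← Matrix.add_kronecker, hsumρ]
  have hentry := congrFun (congrFun hlin (a0, a0)) (a1, a1)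
  simp only [Matrix.add_apply] at hentry
  rw [main _ hn10 a0 a0 a1 a1, main _ hn01 a0 a0 a1 a1,
    main _ hnpp a0 a0 a1 a1, main _ hnpm a0 a0 a1 a1] at hentry
  have hr4 : r ^ 4 = (4:ℂ)⁻¹ := by
    rw [show r ^ 4 = (r ^ 2) ^ 2 by ring, hr2']; norm_num
  simp [hv, hne, hne', hrstar, star_neg] at hentry
  ring_nf at hentry
  rw [hr4] at hentry
  norm_num at hentry
end
end
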